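/- Abstraction-permutation preserves typing with exact sizes: for any distant context D and term t, Γ ⊢ D⟨λx.t⟩ : σ with derivation size n in ∩J if and only if Γ ⊢ λx.D⟨t⟩ : σ with derivation size n. -/

import Mathlib

/-- λJ-terms: t ::= x | λx.t | t(u, y.r) (generalized application, y bound in r). -/
inductive Tm : Type
  | var : ℕ → Tm
  | lam : ℕ → Tm → Tm
  | gapp : Tm → Tm → ℕ → Tm → Tm
  deriving DecidableEq

namespace Tm

/-- Free variables. -/
def fv : Tm → Finset ℕ
  | var x => {x}
  | lam x t => fv t \ {x}
  | gapp t u y r => fv t ∪ fv u ∪ (fv r \ {y})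

/-- Substitution [u/x]t (under the Barendregt convention). -/
def sub (u : Tm) (x : ℕ) : Tm → Tm
  | var y => if y = x then u else var y
  | lam y t => if y = x then lam y t else lam y (sub u x t)
  | gapp t u' y r =>
      gapp (sub u x t) (sub u x u') y (if y = x then r else sub u x r)

end Tm

/-- Distant contexts D ::= ◇ | t(u, y.D). -/
inductive DCtx : Type
  | hole : DCtx
  | gapp : Tm → Tm → ℕ → DCtx → DCtx

/-- Plugging a term into a distant context. -/
def DCtx.fill : DCtx → Tm → Tm
  | .hole, t => t
  | .gapp s u y D, t => Tm.gapp s u y (D.fill t)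

/-- A term has abstraction shape iff it is D⟨λx.s⟩. -/
def AbsShape (t : Tm) : Prop := ∃ D x s, t = DCtx.fill D (Tm.lam x s)

/-- dβ-reduction: D⟨λx.t⟩(u, y.r) → [[u/x](D⟨t⟩)/y]r, closed under all contexts. -/
inductive Dbeta : Tm → Tm → Prop
  | root (D : DCtx) (x : ℕ) (t u : Tm) (y : ℕ) (r : Tm) :
      Dbeta (Tm.gapp (D.fill (Tm.lam x t)) u y r)
            (Tm.sub (Tm.sub u x (D.fill t)) y r)
  | lam (x : ℕ) {t t' : Tm} : Dbeta t t' → Dbeta (Tm.lam x t) (Tm.lam x t')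
  | gapp₁ {t t'} (u : Tm) (y : ℕ) (r : Tm) :
      Dbeta t t' → Dbeta (Tm.gapp t u y r) (Tm.gapp t' u y r)
  | gapp₂ (t : Tm) {u u'} (y : ℕ) (r : Tm) :
      Dbeta u u' → Dbeta (Tm.gapp t u y r) (Tm.gapp t u' y r)
  | gapp₃ (t u : Tm) (y : ℕ) {r r'} :
      Dbeta r r' → Dbeta (Tm.gapp t u y r) (Tm.gapp t u y r')

/-- Strong normalization of a term w.r.t. a reduction relation. -/
def SNOf (R : Tm → Tm → Prop) (t : Tm) : Prop := Acc (fun a b => R b a) t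

/-- dβ-normal form. -/
def DbetaNF (t : Tm) : Prop := ∀ t', ¬ Dbeta t t'

mutual
  /-- Grammar 𝚖_var ::= x | 𝚖_var(𝚖, y.𝚖_var). -/
  inductive Mvar : Tm → Prop
    | var (x : ℕ) : Mvar (.var x)
    | gapp {t u r : Tm} (y : ℕ) : Mvar t → Mnf u → Mvar r → Mvar (.gapp t u y r)
  /-- Grammar 𝚖 ::= x | λx.𝚖 | 𝚖_var(𝚖, y.𝚖). -/
  inductive Mnf : Tm → Prop
    | var (x : ℕ) : Mnf (.var x)
    | lam (x : ℕ) {t : Tm} : Mnf t → Mnf (.lam x t)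
    | gapp {t u r : Tm} (y : ℕ) : Mvar t → Mnf u → Mnf r → Mnf (.gapp t u y r)
end

/-- Neutral terms 𝚗 ::= x | 𝚗(u, y.𝚗). -/
inductive Neutral : Tm → Prop
  | var (x : ℕ) : Neutral (.var x)
  | gapp {t r : Tm} (u : Tm) (y : ℕ) : Neutral t → Neutral r → Neutral (.gapp t u y r)

/-- Answers 𝚊 ::= λx.t | 𝚗(u, y.𝚊). -/
inductive Answer : Tm → Prop
  | lam (x : ℕ) (t : Tm) : Answer (.lam x t)
  | gapp {t r : Tm} (u : Tm) (y : ℕ) : Neutral t → Answer r → Answer (.gapp t u y r)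

/-- D_n : distant contexts whose left components are neutral. -/
def DCtx.NeutralLeft : DCtx → Prop
  | .hole => True
  | .gapp s _ _ D => Neutral s ∧ D.NeutralLeft

/-- Weak-head contexts W ::= ◇ | W(u, y.r) | 𝚗(u, y.W). -/
inductive WCtx : Type
  | hole : WCtx
  | appL : WCtx → Tm → ℕ → Tm → WCtx
  | appR : Tm → Tm → ℕ → WCtx → WCtx

def WCtx.fill : WCtx → Tm → Tm
  | .hole, t => t
  | .appL W u y r, t => Tm.gapp (W.fill t) u y r
  | .appR n u y W, t => Tm.gapp n u y (W.fill t)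

/-- Well-formedness: left components of appR must be neutral. -/
def WCtx.Wf : WCtx → Prop
  | .hole => True
  | .appL W _ _ _ => W.Wf
  | .appR n _ _ W => Neutral n ∧ W.Wf

/-- Weak-head reduction: root dβ-rule with neutral distant context, under weak-head contexts. -/
inductive Wh : Tm → Tm → Prop
  | step (W : WCtx) (hW : W.Wf) (D : DCtx) (hD : D.NeutralLeft)
      (x : ℕ) (t u : Tm) (y : ℕ) (r : Tm) :
      Wh (W.fill (Tm.gapp (D.fill (Tm.lam x t)) u y r))
         (W.fill (Tm.sub (Tm.sub u x (D.fill t)) y r))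

/-- Weak-head normal form. -/
def WhNF (t : Tm) : Prop := ∀ t', ¬ Wh t t'

/-- Inductive characterization of dβ-strong normalization. -/
inductive ISN : Tm → Prop
  | snvar (x : ℕ) : ISN (.var x)
  | snabs {s : Tm} (x : ℕ) : ISN s → ISN (.lam x s)
  | snapp {n u r : Tm} {x : ℕ} : Neutral n → ISN n → ISN u → ISN r →
      WhNF (.gapp n u x r) → ISN (.gapp n u x r)
  | snbeta {W : WCtx} {D : DCtx} {x : ℕ} {s u : Tm} {y : ℕ} {r : Tm} :
      W.Wf → D.NeutralLeft →
      ISN (W.fill (Tm.sub (Tm.sub u x (D.fill s)) y r)) →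
      ISN (D.fill s) → ISN u →
      ISN (W.fill (Tm.gapp (D.fill (Tm.lam x s)) u y r))

/-- Simple types. -/
inductive Ty : Type
  | base : ℕ → Ty
  | arrow : Ty → Ty → Ty

/-- Simple typing for λJ. -/
inductive STyped : (ℕ → Ty) → Tm → Ty → Prop
  | var (Γ : ℕ → Ty) (x : ℕ) : STyped Γ (.var x) (Γ x)
  | abs {Γ : ℕ → Ty} {x : ℕ} {t : Tm} {τ : Ty} (σ : Ty) :
      STyped (Function.update Γ x σ) t τ → STyped Γ (.lam x t) (.arrow σ τ)
  | app {Γ : ℕ → Ty} {t u : Tm} {y : ℕ} {r : Tm} {σ τ ρ : Ty} :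
      STyped Γ t (.arrow σ τ) → STyped Γ u σ →
      STyped (Function.update Γ y τ) r ρ → STyped Γ (.gapp t u y r) ρ

/-- λ-calculus terms. -/
inductive Lm : Type
  | var : ℕ → Lm
  | lam : ℕ → Lm → Lm
  | app : Lm → Lm → Lm

/-- Substitution [u/x]M on λ-terms. -/
def Lm.sub (u : Lm) (x : ℕ) : Lm → Lm
  | .var y => if y = x then u else .var y
  | .lam y t => if y = x then .lam y t else .lam y (Lm.sub u x t)
  | .app t s => .app (Lm.sub u x t) (Lm.sub u x s)

/-- β ∪ σ₁ reduction on λ-terms. -/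
inductive BetaSigma : Lm → Lm → Prop
  | beta (x : ℕ) (M N : Lm) : BetaSigma (.app (.lam x M) N) (Lm.sub N x M)
  | sigma (x : ℕ) (M N P : Lm) :
      BetaSigma (.app (.app (.lam x M) N) P) (.app (.lam x (.app M P)) N)
  | lam (x : ℕ) {t t'} : BetaSigma t t' → BetaSigma (.lam x t) (.lam x t')
  | app₁ {t t'} (s : Lm) : BetaSigma t t' → BetaSigma (.app t s) (.app t' s)
  | app₂ (t : Lm) {s s'} : BetaSigma s s' → BetaSigma (.app t s) (.app t s')

/-- The translation (·)* of λJ into the λ-calculus. -/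
def star : Tm → Lm
  | .var x => .var x
  | .lam x t => .lam x (star t)
  | .gapp t u y r => .app (.lam y (star r)) (.app (star t) (star u))

/-- Non-idempotent intersection types: σ ::= a | M → σ with M a (multi)set of types. -/
inductive ITy : Type
  | base : ℕ → ITy
  | arrow : List ITy → ITy → ITy

/-- Typing environments: relevant maps from variables to multisets of types. -/
def IEnv : Type := ℕ → List ITy

/-- Pointwise multiset union of environments. -/
def envAdd (Γ Δ : IEnv) : IEnv := fun z => Γ z ++ Δ z

/-- Empty environment. -/
def envEmpty : IEnv := fun _ => []

/-- The choice operator: identity on nonempty multisets, arbitrary singleton on the empty one. -/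
def Choice (M M' : List ITy) : Prop :=
  (M ≠ [] ∧ M' = M) ∨ (M = [] ∧ ∃ σ, M' = [σ])

mutual
  /-- Sized typing derivations of system ∩J. -/
  inductive IDer : IEnv → Tm → ITy → ℕ → Prop
    | var (x : ℕ) (σ : ITy) :
        IDer (Function.update envEmpty x [σ]) (.var x) σ 1
    | abs {Γ : IEnv} {x : ℕ} {t : Tm} {σ : ITy} {n : ℕ} :
        IDer Γ t σ n →
        IDer (Function.update Γ x []) (.lam x t) (.arrow (Γ x) σ) (n + 1)
    | app {L : List (List ITy × ITy)} {Mt Mu : List ITy}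
        {Θ Δ Λ : IEnv} {t u r : Tm} {y : ℕ} {σ : ITy} {n₁ n₂ n₃ : ℕ} :
        Choice (L.map fun p => ITy.arrow p.1 p.2) Mt →
        Choice (L.map Prod.fst).flatten Mu →
        IDerM Θ t Mt n₁ →
        IDerM Δ u Mu n₂ →
        Λ y = [] →
        IDer (Function.update Λ y (L.map Prod.snd)) r σ n₃ →
        IDer (envAdd Θ (envAdd Δ Λ)) (.gapp t u y r) σ (1 + n₁ + n₂ + n₃)
  /-- Sized (many)-derivations: multiset conclusions. -/
  inductive IDerM : IEnv → Tm → List ITy → ℕ → Prop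
    | nil (t : Tm) : IDerM envEmpty t [] 0
    | cons {Γ Δ : IEnv} {t : Tm} {σ : ITy} {M : List ITy} {n m : ℕ} :
        IDer Γ t σ n → IDerM Δ t M m → IDerM (envAdd Γ Δ) t (σ :: M) (n + m)
end

/-- Non-erasing dβ-reduction: x ∈ fv(t) and y ∈ fv(r) for the contracted redex. -/
inductive DbetaNE : Tm → Tm → Prop
  | root (D : DCtx) {x : ℕ} {t : Tm} (u : Tm) {y : ℕ} {r : Tm} :
      x ∈ Tm.fv t → y ∈ Tm.fv r →
      DbetaNE (Tm.gapp (D.fill (Tm.lam x t)) u y r)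
              (Tm.sub (Tm.sub u x (D.fill t)) y r)
  | lam (x : ℕ) {t t' : Tm} : DbetaNE t t' → DbetaNE (Tm.lam x t) (Tm.lam x t')
  | gapp₁ {t t'} (u : Tm) (y : ℕ) (r : Tm) :
      DbetaNE t t' → DbetaNE (Tm.gapp t u y r) (Tm.gapp t' u y r)
  | gapp₂ (t : Tm) {u u'} (y : ℕ) (r : Tm) :
      DbetaNE u u' → DbetaNE (Tm.gapp t u y r) (Tm.gapp t u' y r)
  | gapp₃ (t u : Tm) (y : ℕ) {r r'} :
      DbetaNE r r' → DbetaNE (Tm.gapp t u y r) (Tm.gapp t u y r')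

/-- Freshness of a variable for a distant context (capture avoidance). -/
def DCtx.Fresh : DCtx → ℕ → Prop
  | .hole, _ => True
  | .gapp s u y D, x => x ∉ Tm.fv s ∧ x ∉ Tm.fv u ∧ x ≠ y ∧ D.Fresh x

/-- β-reduction of ΛJ: (λx.t)(u, y.r) → [[u/x]t/y]r, closed under contexts. -/
inductive JBeta : Tm → Tm → Prop
  | root (x : ℕ) (t u : Tm) (y : ℕ) (r : Tm) :
      JBeta (Tm.gapp (Tm.lam x t) u y r) (Tm.sub (Tm.sub u x t) y r)
  | lam (x : ℕ) {t t' : Tm} : JBeta t t' → JBeta (Tm.lam x t) (Tm.lam x t')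
  | gapp₁ {t t'} (u : Tm) (y : ℕ) (r : Tm) :
      JBeta t t' → JBeta (Tm.gapp t u y r) (Tm.gapp t' u y r)
  | gapp₂ (t : Tm) {u u'} (y : ℕ) (r : Tm) :
      JBeta u u' → JBeta (Tm.gapp t u y r) (Tm.gapp t u' y r)
  | gapp₃ (t u : Tm) (y : ℕ) {r r'} :
      JBeta r r' → JBeta (Tm.gapp t u y r) (Tm.gapp t u y r')

/-- π-reduction of ΛJ: t(u, x.r)(u', y.r') → t(u, x.r(u', y.r')), closed under contexts. -/
inductive JPi : Tm → Tm → Prop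
  | root (t u : Tm) (x : ℕ) (r u' : Tm) (y : ℕ) (r' : Tm) :
      JPi (Tm.gapp (Tm.gapp t u x r) u' y r') (Tm.gapp t u x (Tm.gapp r u' y r'))
  | lam (x : ℕ) {t t' : Tm} : JPi t t' → JPi (Tm.lam x t) (Tm.lam x t')
  | gapp₁ {t t'} (u : Tm) (y : ℕ) (r : Tm) :
      JPi t t' → JPi (Tm.gapp t u y r) (Tm.gapp t' u y r)
  | gapp₂ (t : Tm) {u u'} (y : ℕ) (r : Tm) :
      JPi u u' → JPi (Tm.gapp t u y r) (Tm.gapp t u' y r)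
  | gapp₃ (t u : Tm) (y : ℕ) {r r'} :
      JPi r r' → JPi (Tm.gapp t u y r) (Tm.gapp t u y r')
lemma iderM_rel {t : Tm}
    (H : ∀ Γ σ n, IDer Γ t σ n → ∀ z, z ∉ t.fv → Γ z = []) :
    ∀ (M : List ITy) (Γ : IEnv) (n : ℕ), IDerM Γ t M n → ∀ z, z ∉ t.fv → Γ z = [] := by
  intro M
  induction M with
  | nil => intro Γ n h z hz; cases h; rfl
  | cons σ M ih =>
    intro Γ n h z hz
    cases h with
    | cons h1 h2 => simp [envAdd, H _ _ _ h1 z hz, ih _ _ h2 z hz]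

lemma ider_rel : ∀ (t : Tm) (Γ : IEnv) (σ : ITy) (n : ℕ),
    IDer Γ t σ n → ∀ z, z ∉ t.fv → Γ z = [] := by
  intro t
  induction t with
  | var x =>
    intro Γ σ n h z hz
    cases h
    simp [Tm.fv] at hz
    simp [Function.update, hz, envEmpty]
  | lam y s ih =>
    intro Γ σ n h z hz
    cases h with
    | abs h0 =>
      simp [Tm.fv] at hz
      by_cases hzy : z = y
      · simp [hzy, Function.update]
      · simp only [Function.update, hzy, dite_false]
        exact ih _ _ _ h0 z (fun hm => hzy (hz hm))
  | gapp a b y r iha ihb ihr =>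
    intro Γ σ n h z hz
    cases h with
    | app hc1 hc2 hΘ hΔ hΛy hr0 =>
      simp [Tm.fv] at hz
      have h1 := iderM_rel iha _ _ _ hΘ z hz.1
      have h2 := iderM_rel ihb _ _ _ hΔ z hz.2.1
      by_cases hzy : z = y
      · subst hzy; simp [envAdd, h1, h2, hΛy]
      · have h3 := ihr _ _ _ hr0 z (fun hm => hzy (hz.2.2 hm))
        simp only [Function.update, hzy, dite_false] at h3
        simp [envAdd, h1, h2, h3]
theorem abstraction_permutation_preserves_typing {Γ : IEnv} (D : DCtx) {x : ℕ}
    {t : Tm} {σ : ITy} {n : ℕ} (hfresh : D.Fresh x) :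
    IDer Γ (D.fill (Tm.lam x t)) σ n ↔ IDer Γ (Tm.lam x (D.fill t)) σ n := by
  induction D generalizing Γ σ n with
  | hole => exact Iff.rfl
  | gapp s u y D ih =>
    obtain ⟨hs, hu, hxy, hD⟩ := hfresh
    constructor
    · intro h
      cases h with
      | app hc1 hc2 hΘ hΔ hΛy hr =>
        rename_i L Mt Mu Θ Δ Λ n₁ n₂ n₃
        have hr' := (ih hD).mp hr
        generalize hE : Function.update Λ y (List.map Prod.snd L) = E at hr'
        cases hr' with
        | abs h0 =>
          rename_i Γ₂ σ₂ m
          have hΘx := iderM_rel (ider_rel s) _ _ _ hΘ x hs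
          have hΔx := iderM_rel (ider_rel u) _ _ _ hΔ x hu
          have hΛx : Λ x = [] := by
            have := congrFun hE x
            simpa [Function.update, hxy] using this
          have hΓ₂y : Γ₂ y = List.map Prod.snd L := by
            have := congrFun hE y
            simp [Function.update, Ne.symm hxy] at this
            exact this.symm
          have hΓ₂z : ∀ z, z ≠ x → z ≠ y → Γ₂ z = Λ z := by
            intro z hzx hzy
            have := congrFun hE z
            simp [Function.update, hzx, hzy] at this
            exact this.symm
          have hEΓ : Function.update (Function.update Γ₂ y [])
              y (List.map Prod.snd L) = Γ₂ := by
            funext z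
            by_cases hz : z = y
            · subst hz; simp [Function.update, hΓ₂y]
            · simp [Function.update, hz]
          have h0' : IDer (Function.update (Function.update Γ₂ y [])
              y (List.map Prod.snd L)) (D.fill t) σ₂ m := by
            rw [hEΓ]; exact h0
          have happ := IDer.app hc1 hc2 hΘ hΔ
            (show Function.update Γ₂ y ([] : List ITy) y = [] by simp [Function.update]) h0'
          have habs := IDer.abs (x := x) happ
          have hEx : envAdd Θ (envAdd Δ (Function.update Γ₂ y [])) x = Γ₂ x := by
            simp [envAdd, hΘx, hΔx, Function.update, hxy]
          have henv : Function.update (envAdd Θ (envAdd Δ (Function.update Γ₂ y []))) x []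
              = envAdd Θ (envAdd Δ Λ) := by
            funext z
            by_cases hzx : z = x
            · subst hzx; simp [envAdd, Function.update, hΘx, hΔx, hΛx]
            · by_cases hzy : z = y
              · subst hzy; simp [envAdd, Function.update, hzx, hΛy]
              · simp [envAdd, Function.update, hzx, hzy, hΓ₂z z hzx hzy]
          rw [hEx, henv] at habs
          exact habs
    · intro h
      cases h with
      | abs h1 =>
        cases h1 with
        | app hc1 hc2 hΘ hΔ hΛy hr =>
          rename_i σ₁ L Mt Mu Θ Δ Λ n₁ n₂ n₃
          have hΘx := iderM_rel (ider_rel s) _ _ _ hΘ x hs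
          have hΔx := iderM_rel (ider_rel u) _ _ _ hΔ x hu
          have habs := IDer.abs (x := x) hr
          rw [show Function.update Λ y (List.map Prod.snd L) x = Λ x from Function.update_of_ne hxy _ _] at habs
          have h2 := (ih hD).mpr habs
          have henv2 : Function.update (Function.update Λ y (List.map Prod.snd L)) x []
              = Function.update (Function.update Λ x []) y (List.map Prod.snd L) := by
            funext z
            by_cases hzx : z = x
            · subst hzx; simp [Function.update, hxy]
            · by_cases hzy : z = y
              · subst hzy; simp [Function.update, hzx]
              · simp [Function.update, hzx, hzy]
          rw [henv2] at h2
          have happ := IDer.app hc1 hc2 hΘ hΔ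
            (show Function.update Λ x ([] : List ITy) y = [] by
              simp [Function.update, Ne.symm hxy, hΛy]) h2
          have henv3 : envAdd Θ (envAdd Δ (Function.update Λ x []))
              = Function.update (envAdd Θ (envAdd Δ Λ)) x [] := by
            funext z
            by_cases hzx : z = x
            · subst hzx; simp [envAdd, Function.update, hΘx, hΔx]
            · simp [envAdd, Function.update, hzx]
          have hty : Λ x = envAdd Θ (envAdd Δ Λ) x := by
            simp [envAdd, hΘx, hΔx]
          rw [henv3, hty] at happ
          exact happ
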